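/- Under the strict Hall condition ∑_{x∈D} α_x < ∑_{y∈N(D)} β_y for all nonempty D ⊆ X, the graph L on complete allocation states (with edges given by single-atom distribution moves) is connected; equivalently, every minimal pair (W¹,W²) of complete allocation states satisfies W¹ = W². -/

import Mathlib

variable {X : Type*} [Fintype X]

/-- Complete allocation state. -/
def IsAllocState (E : X → X → Prop) (α β : X → ℕ) (W : X → X → ℕ) : Prop :=
  (∀ x y, ¬ E x y → W x y = 0) ∧ (∀ x, ∑ y, W x y = α x) ∧ ∀ y, ∑ x, W x y ≤ β y

/-- Single-atom distribution move. -/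
def DistMove [DecidableEq X] (E : X → X → Prop) (β : X → ℕ)
    (W W' : X → X → ℕ) : Prop :=
  ∃ x y y', 0 < W x y ∧ E x y' ∧ (∑ u, W u y') < β y' ∧
    ∀ u v, W' u v = W u v - (if u = x ∧ v = y then 1 else 0)
      + (if u = x ∧ v = y' then 1 else 0)

/-- `δ(W¹,W²) = ∑_{x,y} |W¹_{xy} − W²_{xy}|`. -/
def delta (W₁ W₂ : X → X → ℕ) : ℕ := ∑ x, ∑ y, Nat.dist (W₁ x y) (W₂ x y)

set_option linter.unusedSectionVars false

section Aux
variable [DecidableEq X] {E : X → X → Prop} {α β : X → ℕ}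

lemma sum_single {f g : X → ℕ} (x : X) (h : ∀ u, u ≠ x → f u = g u) :
    (∑ u, f u) + g x = (∑ u, g u) + f x := by
  classical
  rw [← Finset.add_sum_erase _ f (Finset.mem_univ x),
      ← Finset.add_sum_erase _ g (Finset.mem_univ x)]
  have : ∑ u ∈ Finset.univ.erase x, f u = ∑ u ∈ Finset.univ.erase x, g u :=
    Finset.sum_congr rfl (fun u hu => h u (Finset.ne_of_mem_erase hu))
  omega

lemma sum_two {f g : X → ℕ} {y y' : X} (hyy : y ≠ y')
    (h : ∀ v, v ≠ y → v ≠ y' → f v = g v) :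
    (∑ v, f v) + (g y + g y') = (∑ v, g v) + (f y + f y') := by
  classical
  have hy' : y' ∈ Finset.univ.erase y := Finset.mem_erase.mpr ⟨hyy.symm, Finset.mem_univ _⟩
  rw [← Finset.add_sum_erase _ f (Finset.mem_univ y),
      ← Finset.add_sum_erase _ g (Finset.mem_univ y),
      ← Finset.add_sum_erase _ f hy', ← Finset.add_sum_erase _ g hy']
  have : ∑ v ∈ (Finset.univ.erase y).erase y', f v = ∑ v ∈ (Finset.univ.erase y).erase y', g v :=
    Finset.sum_congr rfl (fun v hv => h v (Finset.ne_of_mem_erase (Finset.mem_of_mem_erase hv)) (Finset.ne_of_mem_erase hv))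
  omega

lemma delta_comm (V W : X → X → ℕ) : delta V W = delta W V := by
  simp [delta, Nat.dist_comm]

lemma delta_update {V V' W : X → X → ℕ} {x y y' : X} (hyy : y ≠ y')
    (hrow : ∀ u v, u ≠ x → V' u v = V u v)
    (hcol : ∀ v, v ≠ y → v ≠ y' → V' x v = V x v) :
    delta V' W + (Nat.dist (V x y) (W x y) + Nat.dist (V x y') (W x y'))
      = delta V W + (Nat.dist (V' x y) (W x y) + Nat.dist (V' x y') (W x y')) := by
  have h1 := sum_single (f := fun u => ∑ v, Nat.dist (V' u v) (W u v))
      (g := fun u => ∑ v, Nat.dist (V u v) (W u v)) x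
      (fun u hu => Finset.sum_congr rfl fun v _ => by rw [hrow u v hu])
  have h2 := sum_two (f := fun v => Nat.dist (V' x v) (W x v))
      (g := fun v => Nat.dist (V x v) (W x v)) hyy
      (fun v hv1 hv2 => by rw [hcol v hv1 hv2])
  simp only [delta]
  omega

/-- The result of a single-atom move. -/
def mv (V : X → X → ℕ) (x y y' : X) : X → X → ℕ :=
  fun u v => V u v - (if u = x ∧ v = y then 1 else 0) + (if u = x ∧ v = y' then 1 else 0)

lemma distMove_mv {V : X → X → ℕ} {x y y' : X} (hpos : 0 < V x y) (hE : E x y')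
    (hslack : (∑ u, V u y') < β y') : DistMove E β V (mv V x y y') :=
  ⟨x, y, y', hpos, hE, hslack, fun _ _ => rfl⟩

lemma mv_row {V : X → X → ℕ} {x y y' : X} (u v : X) (hu : u ≠ x) :
    mv V x y y' u v = V u v := by simp [mv, hu]

lemma mv_col {V : X → X → ℕ} {x y y' : X} (v : X) (h1 : v ≠ y) (h2 : v ≠ y') :
    mv V x y y' x v = V x v := by simp [mv, h1, h2]

lemma mv_y {V : X → X → ℕ} {x y y' : X} (hyy : y ≠ y') :
    mv V x y y' x y = V x y - 1 := by simp [mv, hyy]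

lemma mv_y' {V : X → X → ℕ} {x y y' : X} (hyy : y ≠ y') :
    mv V x y y' x y' = V x y' + 1 := by simp [mv, hyy.symm]

lemma colsum_mv {V : X → X → ℕ} {x y y' : X} (hpos : 0 < V x y) (v : X) :
    (∑ u, mv V x y y' u v) + (if v = y then 1 else 0)
      = (∑ u, V u v) + (if v = y' then 1 else 0) := by
  have h := sum_single (f := fun u => mv V x y y' u v) (g := fun u => V u v) x
    (fun u hu => by rw [mv_row _ _ hu])
  have hx : mv V x y y' x v + (if v = y then 1 else 0) = V x v + (if v = y' then 1 else 0) := by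
    simp only [mv, true_and, if_pos rfl]
    rcases eq_or_ne v y with rfl | h1 <;> rcases eq_or_ne v y' with rfl | h2 <;>
      simp_all <;> omega
  omega

lemma mv_self {V : X → X → ℕ} {x y : X} (hpos : 0 < V x y) : mv V x y y = V := by
  funext u v
  simp only [mv]
  split_ifs with h
  · obtain ⟨rfl, rfl⟩ := h; omega
  · omega

lemma colsum_mv_y {V : X → X → ℕ} {x y y' : X} (hpos : 0 < V x y) (hyy : y ≠ y') :
    (∑ u, mv V x y y' u y) + 1 = ∑ u, V u y := by
  have h := colsum_mv (y' := y') (v := y) hpos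
  rwa [if_pos rfl, if_neg hyy, Nat.add_zero] at h

lemma colsum_mv_y' {V : X → X → ℕ} {x y y' : X} (hpos : 0 < V x y) (hyy : y ≠ y') :
    ∑ u, mv V x y y' u y' = (∑ u, V u y') + 1 := by
  have h := colsum_mv (y' := y') (v := y') hpos
  rwa [if_neg (Ne.symm hyy), if_pos rfl, Nat.add_zero] at h

lemma colsum_mv_other {V : X → X → ℕ} {x y y' : X} (hpos : 0 < V x y) {v : X}
    (h1 : v ≠ y) (h2 : v ≠ y') : ∑ u, mv V x y y' u v = ∑ u, V u v := by
  have h := colsum_mv (y' := y') (v := v) hpos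
  rwa [if_neg h1, if_neg h2, Nat.add_zero, Nat.add_zero] at h

lemma rowsum_mv {V : X → X → ℕ} {x y y' : X} (hpos : 0 < V x y) (u : X) :
    (∑ v, mv V x y y' u v) = ∑ v, V u v := by
  rcases eq_or_ne u x with rfl | hu
  · rcases eq_or_ne y y' with rfl | hyy
    · rw [mv_self hpos]
    · have h := sum_two (f := fun v => mv V u y y' u v) (g := fun v => V u v) hyy
        (fun v hv1 hv2 => by rw [mv_col _ hv1 hv2])
      rw [mv_y hyy, mv_y' hyy] at h
      omega
  · exact Finset.sum_congr rfl fun v _ => mv_row _ _ hu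

lemma isAllocState_mv {V : X → X → ℕ} (hV : IsAllocState E α β V) {x y y' : X}
    (hpos : 0 < V x y) (hE : E x y') (hslack : (∑ u, V u y') < β y') :
    IsAllocState E α β (mv V x y y') := by
  obtain ⟨hsupp, hrow, hcol⟩ := hV
  refine ⟨?_, fun u => by rw [rowsum_mv hpos]; exact hrow u, ?_⟩
  · intro u v hEuv
    have h0 := hsupp u v hEuv
    have : ¬ (u = x ∧ v = y') := by rintro ⟨rfl, rfl⟩; exact hEuv hE
    simp [mv, h0, this]
  · intro v
    rcases eq_or_ne y y' with rfl | hyy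
    · rw [mv_self hpos]; exact hcol v
    · rcases eq_or_ne v y with rfl | h1
      · have h := colsum_mv_y hpos hyy
        have := hcol v; omega
      · rcases eq_or_ne v y' with rfl | h2
        · have h := colsum_mv_y' hpos hyy
          omega
        · rw [colsum_mv_other hpos h1 h2]; exact hcol v

lemma distMove_state {V V' : X → X → ℕ} (hV : IsAllocState E α β V)
    (h : DistMove E β V V') : IsAllocState E α β V' := by
  obtain ⟨x, y, y', hpos, hE, hslack, heq⟩ := h
  have : V' = mv V x y y' := funext fun u => funext fun v => heq u v
  rw [this]; exact isAllocState_mv hV hpos hE hslack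

lemma distMove_symm {V V' : X → X → ℕ} (hV : IsAllocState E α β V)
    (h : DistMove E β V V') : DistMove E β V' V := by
  obtain ⟨x, y, y', hpos, hE', hslack, heq⟩ := h
  have hVeq : V' = mv V x y y' := funext fun u => funext fun v => heq u v
  subst hVeq
  have hEy : E x y := by
    by_contra hc; rw [hV.1 x y hc] at hpos; omega
  rcases eq_or_ne y y' with rfl | hyy
  · rw [mv_self hpos]
    refine ⟨x, y, y, hpos, hEy, hslack, fun u v => ?_⟩
    split_ifs with h
    · obtain ⟨rfl, rfl⟩ := h; omega
    · omega
  · refine ⟨x, y', y, ?_, hEy, ?_, ?_⟩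
    · rw [mv_y' hyy]; omega
    · have h := colsum_mv_y hpos hyy
      have := hV.2.2 y
      omega
    · intro u v
      by_cases h1 : u = x ∧ v = y
      · obtain ⟨rfl, rfl⟩ := h1
        rw [mv_y hyy, if_neg (fun h => hyy h.2), if_pos ⟨rfl, rfl⟩]
        omega
      · by_cases h2 : u = x ∧ v = y'
        · obtain ⟨rfl, rfl⟩ := h2
          rw [mv_y' hyy, if_pos ⟨rfl, rfl⟩, if_neg (fun h => hyy h.2.symm)]
          omega
        · rw [if_neg h2, if_neg h1]
          simp [mv, h1, h2]

lemma rtg_state {V W : X → X → ℕ} (hV : IsAllocState E α β V)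
    (h : Relation.ReflTransGen (DistMove E β) V W) : IsAllocState E α β W := by
  induction h with
  | refl => exact hV
  | tail _ hmv ih => exact distMove_state ih hmv

lemma rtg_symm {V W : X → X → ℕ} (hV : IsAllocState E α β V)
    (h : Relation.ReflTransGen (DistMove E β) V W) :
    Relation.ReflTransGen (DistMove E β) W V := by
  induction h with
  | refl => exact Relation.ReflTransGen.refl
  | tail h1 hmv ih =>
      exact Relation.ReflTransGen.trans
        (Relation.ReflTransGen.single (distMove_symm (rtg_state hV h1) hmv)) ih

/-- Minimality of a pair w.r.t. reachable pairs. -/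
def MinPair (E : X → X → Prop) [DecidableEq X] (β : X → ℕ) (V₁ V₂ : X → X → ℕ) : Prop :=
  ∀ U₁ U₂ : X → X → ℕ, Relation.ReflTransGen (DistMove E β) V₁ U₁ →
    Relation.ReflTransGen (DistMove E β) V₂ U₂ → delta V₁ V₂ ≤ delta U₁ U₂

/-- Helper: a row with equal sums and a difference has entries in both directions. -/
lemma row_both {f g : X → ℕ} (hsum : ∑ v, f v = ∑ v, g v) {s₀ : X} (hne : f s₀ ≠ g s₀) :
    (∃ s, g s < f s) ∧ (∃ s, f s < g s) := by
  constructor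
  · by_contra hno; push_neg at hno
    have hlt : ∑ v, f v < ∑ v, g v :=
      Finset.sum_lt_sum (fun i _ => hno i) ⟨s₀, Finset.mem_univ s₀,
        lt_of_le_of_ne (hno s₀) hne⟩
    omega
  · by_contra hno; push_neg at hno
    have hlt : ∑ v, g v < ∑ v, f v :=
      Finset.sum_lt_sum (fun i _ => hno i) ⟨s₀, Finset.mem_univ s₀,
        lt_of_le_of_ne (hno s₀) (Ne.symm hne)⟩
    omega

/-- Minimal-pair lemma part 1: any column with slack (in `V₁`) is identical in
`V₁` and `V₂`. -/
lemma colEq {V₁ V₂ : X → X → ℕ} (h1 : IsAllocState E α β V₁) (h2 : IsAllocState E α β V₂)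
    (hmin : MinPair E β V₁ V₂) {y : X} (hslack : (∑ u, V₁ u y) < β y) :
    ∀ u, V₁ u y = V₂ u y := by
  by_contra hne; push_neg at hne
  obtain ⟨u₀, hu₀⟩ := hne
  by_cases hdef : ∃ x, V₁ x y < V₂ x y
  · obtain ⟨x, hx⟩ := hdef
    have hrow : ∑ v, V₁ x v = ∑ v, V₂ x v := by rw [h1.2.1 x, h2.2.1 x]
    obtain ⟨⟨s, hs⟩, -⟩ := row_both hrow (f := fun v => V₁ x v) (g := fun v => V₂ x v)
      (s₀ := y) (by omega)
    have hsy : s ≠ y := fun h => by rw [h] at hs; omega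
    have hE : E x y := by
      by_contra hc; rw [h2.1 x y hc] at hx; omega
    have hmv : DistMove E β V₁ (mv V₁ x s y) := distMove_mv (by omega) hE hslack
    have eq1 := delta_update (V := V₁) (V' := mv V₁ x s y) (W := V₂) (x := x) hsy
      (fun u v hu => mv_row _ _ hu) (fun v hv1 hv2 => mv_col _ hv1 hv2)
    rw [mv_y hsy, mv_y' hsy] at eq1
    have hd := hmin (mv V₁ x s y) V₂ (Relation.ReflTransGen.single hmv)
      Relation.ReflTransGen.refl
    simp only [Nat.dist] at eq1
    omega
  · push_neg at hdef
    have hu : V₂ u₀ y < V₁ u₀ y := lt_of_le_of_ne (hdef u₀) (Ne.symm hu₀)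
    have hrow : ∑ v, V₁ u₀ v = ∑ v, V₂ u₀ v := by rw [h1.2.1 u₀, h2.2.1 u₀]
    obtain ⟨-, ⟨s, hs⟩⟩ := row_both hrow (f := fun v => V₁ u₀ v) (g := fun v => V₂ u₀ v)
      (s₀ := y) (by omega)
    have hsy : s ≠ y := fun h => by rw [h] at hs; omega
    have hE : E u₀ y := by
      by_contra hc; rw [h1.1 u₀ y hc] at hu; omega
    have hslack2 : (∑ u, V₂ u y) < β y :=
      lt_of_le_of_lt (Finset.sum_le_sum fun i _ => hdef i) hslack
    have hmv : DistMove E β V₂ (mv V₂ u₀ s y) := distMove_mv (by omega) hE hslack2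
    have eq1 := delta_update (V := V₂) (V' := mv V₂ u₀ s y) (W := V₁) (x := u₀) hsy
      (fun u v hu => mv_row _ _ hu) (fun v hv1 hv2 => mv_col _ hv1 hv2)
    rw [mv_y hsy, mv_y' hsy] at eq1
    have hd := hmin V₁ (mv V₂ u₀ s y) Relation.ReflTransGen.refl
      (Relation.ReflTransGen.single hmv)
    have dc1 : delta V₁ (mv V₂ u₀ s y) = delta (mv V₂ u₀ s y) V₁ := delta_comm _ _
    have dc2 : delta V₁ V₂ = delta V₂ V₁ := delta_comm _ _
    simp only [Nat.dist] at eq1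
    omega

/-- Minimal-pair lemma part 2 (endgame): a row containing a difference cannot be
`E`-adjacent to a column with slack. -/
lemma endgame {V₁ V₂ : X → X → ℕ} (h1 : IsAllocState E α β V₁) (h2 : IsAllocState E α β V₂)
    (hmin : MinPair E β V₁ V₂) {x₀ z : X} (hx : ∃ s, V₁ x₀ s ≠ V₂ x₀ s)
    (hE : E x₀ z) (hslack : (∑ u, V₁ u z) < β z) : False := by
  have hcol := colEq h1 h2 hmin hslack
  obtain ⟨s₀, hs₀⟩ := hx
  have hrow : ∑ v, V₁ x₀ v = ∑ v, V₂ x₀ v := by rw [h1.2.1 x₀, h2.2.1 x₀]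
  obtain ⟨⟨s, hs⟩, ⟨s', hs'⟩⟩ := row_both hrow (f := fun v => V₁ x₀ v)
    (g := fun v => V₂ x₀ v) (s₀ := s₀) hs₀
  have hcz : V₁ x₀ z = V₂ x₀ z := hcol x₀
  have hsz : s ≠ z := fun h => by rw [h] at hs; omega
  have hs'z : s' ≠ z := fun h => by rw [h] at hs'; omega
  have hslack2 : (∑ u, V₂ u z) < β z := by
    have : ∑ u, V₂ u z = ∑ u, V₁ u z := Finset.sum_congr rfl fun u _ => (hcol u).symm
    omega
  have hmv1 : DistMove E β V₁ (mv V₁ x₀ s z) := distMove_mv (by omega) hE hslack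
  have hmv2 : DistMove E β V₂ (mv V₂ x₀ s' z) := distMove_mv (by omega) hE hslack2
  set V₁' := mv V₁ x₀ s z with hV₁'
  set V₂' := mv V₂ x₀ s' z with hV₂'
  have eq1 := delta_update (V := V₁) (V' := V₁') (W := V₂') (x := x₀) hsz
    (fun u v hu => mv_row _ _ hu) (fun v hv1 hv2 => mv_col _ hv1 hv2)
  have eq2 := delta_update (V := V₂) (V' := V₂') (W := V₁) (x := x₀) hs'z
    (fun u v hu => mv_row _ _ hu) (fun v hv1 hv2 => mv_col _ hv1 hv2)
  have e1 : V₁' x₀ s = V₁ x₀ s - 1 := mv_y hsz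
  have e2 : V₁' x₀ z = V₁ x₀ z + 1 := mv_y' hsz
  have e3 : V₂' x₀ s' = V₂ x₀ s' - 1 := mv_y hs'z
  have e4 : V₂' x₀ z = V₂ x₀ z + 1 := mv_y' hs'z
  have e5 : V₂' x₀ s = V₂ x₀ s := mv_col _ (fun h => by rw [h] at hs; omega) hsz
  rw [e1, e2, e5, e4] at eq1
  rw [e3, e4] at eq2
  have hd := hmin V₁' V₂' (Relation.ReflTransGen.single hmv1)
    (Relation.ReflTransGen.single hmv2)
  have dc1 : delta V₁ V₂' = delta V₂' V₁ := delta_comm _ _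
  have dc2 : delta V₁ V₂ = delta V₂ V₁ := delta_comm _ _
  simp only [Nat.dist] at eq1 eq2
  omega

end Aux

/-- Columns reachable by an alternating path starting at a row where the two
allocations differ. -/
inductive Rch (E : X → X → Prop) (V₁ V₂ : X → X → ℕ) : ℕ → X → Prop
  | base {x y : X} : (∃ s, V₁ x s ≠ V₂ x s) → E x y → Rch E V₁ V₂ 0 y
  | step {t : ℕ} {x y y' : X} : Rch E V₁ V₂ t y → 0 < V₁ x y → E x y' →
      Rch E V₁ V₂ (t + 1) y'

section Main
variable [DecidableEq X] {E : X → X → Prop} [DecidableRel E] {α β : X → ℕ}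

lemma rch_repair {V₁ V₂ V₁' V₂' : X → X → ℕ} {x y : X}
    (hd : ∀ u s, (V₁' u s = V₂' u s ↔ V₁ u s = V₂ u s))
    (hmono : ∀ u v, ¬(u = x ∧ v = y) → V₁ u v ≤ V₁' u v) :
    ∀ {t z}, Rch E V₁ V₂ t z →
      Rch E V₁' V₂' t z ∨ ∃ j, j < t ∧ Rch E V₁ V₂ j y := by
  intro t z h
  induction h with
  | @base x₀ z hx hE =>
      refine Or.inl (Rch.base ?_ hE)
      obtain ⟨s, hs⟩ := hx
      exact ⟨s, fun hc => hs ((hd x₀ s).1 hc)⟩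
  | @step t' x₁ y₁ z h1 hpos hE ih =>
      rcases ih with hL | ⟨j, hj, hr⟩
      · by_cases hc : x₁ = x ∧ y₁ = y
        · exact Or.inr ⟨t', Nat.lt_succ_self _, hc.2 ▸ h1⟩
        · exact Or.inl (Rch.step hL (lt_of_lt_of_le hpos (hmono _ _ hc)) hE)
      · exact Or.inr ⟨j, hj.trans (Nat.lt_succ_self _), hr⟩

/-- Key lemma: for a minimal pair, no reachable column has slack (in `V₁`)
unless the pair is equal — phrased as: a reachable slack column yields `False`. -/
lemma key_lemma :
    ∀ t : ℕ, ∀ V₁ V₂ : X → X → ℕ, IsAllocState E α β V₁ → IsAllocState E α β V₂ →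
      MinPair E β V₁ V₂ → ∀ y, Rch E V₁ V₂ t y → (∑ u, V₁ u y) < β y → False := by
  intro t
  induction t using Nat.strong_induction_on with
  | _ t ih =>
  intro V₁ V₂ h1 h2 hmin y hr hslack
  cases hr with
  | @base x₀ _ hx hE => exact endgame h1 h2 hmin hx hE hslack
  | @step t' x y₀ _ hty hpos hE =>
      by_cases hsl : (∑ u, V₁ u y₀) < β y₀
      · exact ih t' (Nat.lt_succ_self _) V₁ V₂ h1 h2 hmin y₀ hty hsl
      · -- y₀ is full
        have hfull : (∑ u, V₁ u y₀) = β y₀ := le_antisymm (h1.2.2 y₀) (not_lt.mp hsl)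
        by_cases hd0 : V₁ x y₀ = V₂ x y₀
        · -- mirrored move on both sides
          have hcolEq : ∀ u, V₁ u y = V₂ u y := colEq h1 h2 hmin hslack
          have hyy : y₀ ≠ y := fun h => by rw [h] at hfull; omega
          have hslack2 : (∑ u, V₂ u y) < β y := by
            have : ∑ u, V₂ u y = ∑ u, V₁ u y :=
              Finset.sum_congr rfl fun u _ => (hcolEq u).symm
            omega
          have hpos2 : 0 < V₂ x y₀ := hd0 ▸ hpos
          set V₁' := mv V₁ x y₀ y with hV₁'
          set V₂' := mv V₂ x y₀ y with hV₂'
          have hmv1 : DistMove E β V₁ V₁' := distMove_mv hpos hE hslack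
          have hmv2 : DistMove E β V₂ V₂' := distMove_mv hpos2 hE hslack2
          have hst1 : IsAllocState E α β V₁' := distMove_state h1 hmv1
          have hst2 : IsAllocState E α β V₂' := distMove_state h2 hmv2
          -- delta is unchanged
          have eq1 := delta_update (V := V₁) (V' := V₁') (W := V₂') (x := x) hyy
            (fun u v hu => mv_row _ _ hu) (fun v hv1 hv2 => mv_col _ hv1 hv2)
          have eq2 := delta_update (V := V₂) (V' := V₂') (W := V₁) (x := x) hyy
            (fun u v hu => mv_row _ _ hu) (fun v hv1 hv2 => mv_col _ hv1 hv2)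
          have e1 : V₁' x y₀ = V₁ x y₀ - 1 := mv_y hyy
          have e2 : V₁' x y = V₁ x y + 1 := mv_y' hyy
          have e3 : V₂' x y₀ = V₂ x y₀ - 1 := mv_y hyy
          have e4 : V₂' x y = V₂ x y + 1 := mv_y' hyy
          rw [e1, e2, e3, e4] at eq1
          rw [e3, e4] at eq2
          have hcy : V₁ x y = V₂ x y := hcolEq x
          have hdeq : delta V₁' V₂' = delta V₁ V₂ := by
            have dc1 : delta V₂' V₁ = delta V₁ V₂' := delta_comm _ _
            have dc2 : delta V₂ V₁ = delta V₁ V₂ := delta_comm _ _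
            simp only [Nat.dist] at eq1 eq2
            omega
          have hmin' : MinPair E β V₁' V₂' := by
            intro U₁ U₂ hU1 hU2
            rw [hdeq]
            exact hmin U₁ U₂ (Relation.ReflTransGen.head hmv1 hU1)
              (Relation.ReflTransGen.head hmv2 hU2)
          -- repair the path
          have hd : ∀ u s, (V₁' u s = V₂' u s ↔ V₁ u s = V₂ u s) := by
            intro u s
            rw [hV₁', hV₂']
            by_cases hux : u = x
            · subst hux
              by_cases hs1 : s = y₀
              · subst hs1
                rw [mv_y hyy, mv_y hyy, hd0]
                simp
              · by_cases hs2 : s = y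
                · subst hs2
                  rw [mv_y' hyy, mv_y' hyy, hcy]
                  simp
                · rw [mv_col _ hs1 hs2, mv_col _ hs1 hs2]
            · rw [mv_row _ _ hux, mv_row _ _ hux]
          have hmono : ∀ u v, ¬(u = x ∧ v = y₀) → V₁ u v ≤ V₁' u v := by
            intro u v hc
            rw [hV₁']
            by_cases hux : u = x
            · subst hux
              by_cases hv : v = y
              · subst hv; rw [mv_y' hyy]; omega
              · rw [mv_col _ (fun h => hc ⟨rfl, h⟩) hv]
            · rw [mv_row _ _ hux]
          rcases rch_repair (E := E) hd hmono hty with hL | ⟨j, hj, hr'⟩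
          · have hsl' : (∑ u, V₁' u y₀) < β y₀ := by
              have h := colsum_mv_y (x := x) (y' := y) hpos hyy
              rw [hV₁']
              omega
            exact ih t' (Nat.lt_succ_self _) V₁' V₂' hst1 hst2 hmin' y₀ hL hsl'
          · exact ih (j + 1) (by omega) V₁ V₂ h1 h2 hmin y
              (Rch.step hr' hpos hE) hslack
        · exact endgame h1 h2 hmin ⟨y₀, hd0⟩ hE hslack

/-- Strict-Hall path lemma: if the two states differ somewhere, some reachable
column has slack in `V₁`. -/
lemma slack_exists {V₁ V₂ : X → X → ℕ} (h1 : IsAllocState E α β V₁)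
    (hne : V₁ ≠ V₂)
    (hall : ∀ D : Finset X, D.Nonempty → ∑ x ∈ D, α x <
      ∑ y ∈ D.biUnion (fun x => Finset.univ.filter fun y => E x y), β y) :
    ∃ t y, Rch E V₁ V₂ t y ∧ (∑ u, V₁ u y) < β y := by
  classical
  by_contra hno
  push_neg at hno
  set Cr : Finset X := Finset.univ.filter (fun z => ∃ t, Rch E V₁ V₂ t z) with hCr
  set Rr : Finset X := Finset.univ.filter
    (fun u => (∃ s, V₁ u s ≠ V₂ u s) ∨ ∃ z ∈ Cr, 0 < V₁ u z) with hRr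
  have hx₀ : ∃ u s, V₁ u s ≠ V₂ u s := by
    by_contra h; push_neg at h
    exact hne (funext fun u => funext fun s => h u s)
  obtain ⟨u₀, s₀, hus⟩ := hx₀
  have hRne : Rr.Nonempty :=
    ⟨u₀, Finset.mem_filter.mpr ⟨Finset.mem_univ _, Or.inl ⟨s₀, hus⟩⟩⟩
  have hEC : ∀ u ∈ Rr, ∀ z, E u z → z ∈ Cr := by
    intro u hu z hEz
    rw [hRr, Finset.mem_filter] at hu
    rw [hCr, Finset.mem_filter]
    refine ⟨Finset.mem_univ _, ?_⟩
    rcases hu.2 with hdiff | ⟨z', hz', hposz⟩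
    · exact ⟨0, Rch.base hdiff hEz⟩
    · rw [hCr, Finset.mem_filter] at hz'
      obtain ⟨t, ht⟩ := hz'.2
      exact ⟨t + 1, Rch.step ht hposz hEz⟩
  have hfull : ∀ z ∈ Cr, (∑ u, V₁ u z) = β z := by
    intro z hz
    rw [hCr, Finset.mem_filter] at hz
    obtain ⟨t, ht⟩ := hz.2
    exact le_antisymm (h1.2.2 z) (hno t z ht)
  have hmain : ∑ z ∈ Cr, β z = ∑ u ∈ Rr, α u := by
    calc ∑ z ∈ Cr, β z = ∑ z ∈ Cr, ∑ u, V₁ u z :=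
          Finset.sum_congr rfl (fun z hz => (hfull z hz).symm)
      _ = ∑ z ∈ Cr, ∑ u ∈ Rr, V₁ u z := by
          refine Finset.sum_congr rfl (fun z hz => ?_)
          refine (Finset.sum_subset (Finset.subset_univ Rr) (fun u _ hu => ?_)).symm
          by_contra hc
          exact hu (Finset.mem_filter.mpr ⟨Finset.mem_univ _,
            Or.inr ⟨z, hz, Nat.pos_of_ne_zero hc⟩⟩)
      _ = ∑ u ∈ Rr, ∑ z ∈ Cr, V₁ u z := Finset.sum_comm
      _ = ∑ u ∈ Rr, ∑ z, V₁ u z := by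
          refine Finset.sum_congr rfl (fun u hu => ?_)
          refine Finset.sum_subset (Finset.subset_univ Cr) (fun z _ hz => ?_)
          by_contra hc
          have hpos := Nat.pos_of_ne_zero hc
          have hEz : E u z := by
            by_contra hcE; rw [h1.1 u z hcE] at hpos; omega
          exact hz (hEC u hu z hEz)
      _ = ∑ u ∈ Rr, α u := Finset.sum_congr rfl (fun u _ => h1.2.1 u)
  have hhall := hall Rr hRne
  have hsub : Rr.biUnion (fun x => Finset.univ.filter fun y => E x y) ⊆ Cr := by
    intro z hz
    rw [Finset.mem_biUnion] at hz
    obtain ⟨u, hu, hz'⟩ := hz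
    rw [Finset.mem_filter] at hz'
    exact hEC u hu z hz'.2
  have hle : ∑ z ∈ Rr.biUnion (fun x => Finset.univ.filter fun y => E x y), β z
      ≤ ∑ z ∈ Cr, β z := Finset.sum_le_sum_of_subset hsub
  omega

lemma minimal_pair_eq {V₁ V₂ : X → X → ℕ} (h1 : IsAllocState E α β V₁)
    (h2 : IsAllocState E α β V₂) (hmin : MinPair E β V₁ V₂)
    (hall : ∀ D : Finset X, D.Nonempty → ∑ x ∈ D, α x <
      ∑ y ∈ D.biUnion (fun x => Finset.univ.filter fun y => E x y), β y) :
    V₁ = V₂ := by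
  by_contra hne
  obtain ⟨t, y, hr, hs⟩ := slack_exists h1 hne hall
  exact key_lemma t V₁ V₂ h1 h2 hmin y hr hs

end Main

lemma delta_eq_zero {V W : X → X → ℕ} (h : delta V W = 0) : V = W := by
  funext u v
  simp only [delta] at h
  have h1 := (Finset.sum_eq_zero_iff.mp h) u (Finset.mem_univ u)
  have h2 := (Finset.sum_eq_zero_iff.mp h1) v (Finset.mem_univ v)
  simp only [Nat.dist] at h2
  omega


/-- under the strict Hall condition, the graph `L` on complete
allocation states (edges = single-atom distribution moves) is connected;
equivalently, every minimal pair of complete allocation states is a pair of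
equal states. -/
theorem distribution_graph_connected [DecidableEq X]
    (E : X → X → Prop) [DecidableRel E] (α β : X → ℕ)
    (hall : ∀ D : Finset X, D.Nonempty → ∑ x ∈ D, α x <
      ∑ y ∈ D.biUnion (fun x => Finset.univ.filter fun y => E x y), β y) :
    (∀ W₁ W₂ : X → X → ℕ, IsAllocState E α β W₁ → IsAllocState E α β W₂ →
      Relation.ReflTransGen (DistMove E β) W₁ W₂) ∧
    (∀ W₁ W₂ : X → X → ℕ, IsAllocState E α β W₁ → IsAllocState E α β W₂ →
      (∀ V₁ V₂ : X → X → ℕ,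
        Relation.ReflTransGen (DistMove E β) W₁ V₁ →
        Relation.ReflTransGen (DistMove E β) W₂ V₂ →
        delta W₁ W₂ ≤ delta V₁ V₂) →
      W₁ = W₂) := by
  classical
  have conn : ∀ W₁ W₂ : X → X → ℕ, IsAllocState E α β W₁ → IsAllocState E α β W₂ →
      Relation.ReflTransGen (DistMove E β) W₁ W₂ := by
    intro W₁ W₂ h1 h2
    have hP : ∃ n : ℕ, ∃ V₁ V₂ : X → X → ℕ,
        Relation.ReflTransGen (DistMove E β) W₁ V₁ ∧
        Relation.ReflTransGen (DistMove E β) W₂ V₂ ∧ delta V₁ V₂ = n :=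
      ⟨delta W₁ W₂, W₁, W₂, Relation.ReflTransGen.refl, Relation.ReflTransGen.refl, rfl⟩
    obtain ⟨V₁, V₂, hr1, hr2, hn⟩ := Nat.find_spec hP
    have hmin : MinPair E β V₁ V₂ := by
      intro U₁ U₂ hU1 hU2
      rw [hn]
      exact Nat.find_min' hP ⟨U₁, U₂, hr1.trans hU1, hr2.trans hU2, rfl⟩
    have heq := minimal_pair_eq (rtg_state h1 hr1) (rtg_state h2 hr2) hmin hall
    refine hr1.trans ?_
    rw [heq]
    exact rtg_symm h2 hr2
  refine ⟨conn, ?_⟩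
  intro W₁ W₂ h1 h2 hmin
  have h := hmin W₂ W₂ (conn W₁ W₂ h1 h2) Relation.ReflTransGen.refl
  have hz : delta W₂ W₂ = 0 := by simp [delta, Nat.dist_self]
  exact delta_eq_zero (by omega)
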